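/- Let $n \ge 2$ be an integer, let $\delta \in (-1, 1)$ be a nonzero real number, and let $p$ be a real number with $\frac{5n-1}{2(n+1)} < p \le \frac{2n}{n+1} + \frac{n-1}{(n+1)(2 - |\delta|)}$. Then the vertex $z_0 = -\frac{\delta\left[2p(n+1) - 4n\right]}{2\left[2p(n+1) - 5n + 1\right]}$ of the quadratic $g$ satisfies $|z_0| \ge 1$, i.e. $z_0 \notin (-1, 1)$. -/
import Mathlib


theorem vertex_outside (n : ℕ) (hn : 2 ≤ n) (δ : ℝ) (hδ : δ ∈ Set.Ioo (-1 : ℝ) 1)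
    (hδ0 : δ ≠ 0) (p : ℝ)
    (hp1 : (5 * (n : ℝ) - 1) / (2 * ((n : ℝ) + 1)) < p)
    (hp2 : p ≤ 2 * (n : ℝ) / ((n : ℝ) + 1) + ((n : ℝ) - 1) / (((n : ℝ) + 1) * (2 - |δ|))) :
    |(-(δ * (2 * p * ((n : ℝ) + 1) - 4 * (n : ℝ))) / (2 * (2 * p * ((n : ℝ) + 1) - 5 * (n : ℝ) + 1)))| ≥ 1 := by
  obtain ⟨hδ1, hδ2⟩ := hδ
  have hn2 : (2 : ℝ) ≤ (n : ℝ) := by exact_mod_cast hn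
  have habs : |δ| < 1 := abs_lt.mpr ⟨hδ1, hδ2⟩
  have habs0 : 0 < |δ| := abs_pos.mpr hδ0
  have h2δ : 0 < 2 - |δ| := by linarith
  have hnp : (0 : ℝ) < (n : ℝ) + 1 := by linarith
  have hA : 0 < 2 * p * ((n : ℝ) + 1) - 5 * (n : ℝ) + 1 := by
    rw [div_lt_iff₀ (by positivity)] at hp1
    nlinarith
  have hB : 0 < 2 * p * ((n : ℝ) + 1) - 4 * (n : ℝ) := by nlinarith
  have key : (2 * p * ((n : ℝ) + 1) - 4 * (n : ℝ)) * (2 - |δ|) ≤ 2 * ((n : ℝ) - 1) := by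
    have h1 : ((n : ℝ) - 1) / (((n : ℝ) + 1) * (2 - |δ|)) * (((n : ℝ) + 1) * (2 - |δ|))
        = (n : ℝ) - 1 := div_mul_cancel₀ _ (by positivity)
    have h2 : 2 * (n : ℝ) / ((n : ℝ) + 1) * ((n : ℝ) + 1) = 2 * (n : ℝ) :=
      div_mul_cancel₀ _ (by positivity)
    have := mul_le_mul_of_nonneg_right hp2 (le_of_lt (by positivity :
      (0 : ℝ) < ((n : ℝ) + 1) * (2 - |δ|)))
    nlinarith
  have hmain : 2 * (2 * p * ((n : ℝ) + 1) - 5 * (n : ℝ) + 1)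
      ≤ |δ| * (2 * p * ((n : ℝ) + 1) - 4 * (n : ℝ)) := by nlinarith
  rw [ge_iff_le, abs_div, le_div_iff₀ (by positivity)]
  simp only [abs_neg, abs_mul]
  rw [abs_of_pos hB, abs_of_pos hA, abs_of_pos (by norm_num : (0:ℝ) < 2)]
  nlinarith
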